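/- arXiv:0906.3139 — 2 statements merged into one kernel-verified Lean document; each statement's English description precedes it below -/
import Mathlib

section
/- Let Φ : ℂ → ℝ be a positive, continuous and bounded function and let M := sup_{w∈ℂ} Φ(w). Then every subsolution f for Φ satisfies |f'(z)| ≤ M for all z in the unit disk 𝔻; consequently every subsolution extends to a Lipschitz continuous function on the closed unit disk (with Lipschitz constant M independent of f), and the family A_Φ of all subsolutions is uniformly bounded on the closed unit disk and equicontinuous at every point of the closed unit disk. -/
open Complex Filter Set Metric MeasureTheory

noncomputable section

/-- The class `H₀(𝔻)`: holomorphic on the unit disk, `f 0 = 0`, `f'(0)` real and positive. -/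
def MemH0 (f : ℂ → ℂ) : Prop :=
  DifferentiableOn ℂ f (Metric.ball (0 : ℂ) 1) ∧ f 0 = 0 ∧
    0 < (deriv f 0).re ∧ (deriv f 0).im = 0

/-- The filter of points `z` of the unit disk with `|z| → 1`. -/
def toBoundary : Filter ℂ := Filter.comap (fun z : ℂ => ‖z‖) (nhdsWithin 1 (Set.Iio 1))

/-- `f` is a subsolution for `Φ`: `limsup_{|z|→1} (|f'(z)| - Φ(f(z))) ≤ 0`. -/
def IsSubsolution (Φ : ℂ → ℝ) (f : ℂ → ℂ) : Prop :=
  MemH0 f ∧ ∀ ε > 0, ∀ᶠ z in toBoundary, ‖deriv f z‖ - Φ (f z) < ε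


lemma aux_deriv_bound (Φ : ℂ → ℝ) (hbdd : BddAbove (Set.range Φ))
    (M : ℝ) (hM : M = sSup (Set.range Φ)) (f : ℂ → ℂ) (hf : IsSubsolution Φ f) :
    ∀ z ∈ Metric.ball (0 : ℂ) 1, ‖deriv f z‖ ≤ M := by
  obtain ⟨⟨hdiff, -⟩, hsub⟩ := hf
  have ΦleM : ∀ w, Φ w ≤ M := fun w => hM ▸ le_csSup hbdd ⟨w, rfl⟩
  intro z hz
  have hz1 : ‖z‖ < 1 := by simpa using hz
  refine le_of_forall_pos_le_add fun ε hε => ?_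
  have h := hsub ε hε
  rw [toBoundary, eventually_comap] at h
  rw [eventually_iff, mem_nhdsLT_iff_exists_Ioo_subset] at h
  obtain ⟨l, hl, hIoo⟩ := h
  set r : ℝ := max l ‖z‖ with hr
  have hr1 : r < 1 := max_lt hl hz1
  set r' : ℝ := (r + 1) / 2 with hr'
  have hrr' : r < r' := by simp only [hr']; linarith
  have hr'1 : r' < 1 := by simp only [hr']; linarith
  have hr'0 : 0 < r' := lt_of_le_of_lt (le_max_right _ _) hrr' |>.trans_le' (norm_nonneg z) |>.trans_le (le_refl _) |>.trans_le (le_refl _)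
  have hd1 : DifferentiableOn ℂ (deriv f) (Metric.ball (0:ℂ) 1) :=
    (hdiff.analyticOnNhd isOpen_ball).deriv.differentiableOn
  have hd2 : DiffContOnCl ℂ (deriv f) (Metric.ball (0:ℂ) r') := by
    refine ⟨hd1.mono (Metric.ball_subset_ball hr'1.le), ?_⟩
    refine hd1.continuousOn.mono ?_
    rw [closure_ball _ hr'0.ne']
    exact Metric.closedBall_subset_ball hr'1
  have hfr : ∀ w ∈ frontier (Metric.ball (0:ℂ) r'), ‖deriv f w‖ ≤ M + ε := by
    intro w hw
    rw [frontier_ball _ hr'0.ne'] at hw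
    have habs : ‖w‖ = r' := by simpa using hw
    have hmem : ‖w‖ ∈ Set.Ioo l 1 := by
      rw [habs]; exact ⟨lt_of_le_of_lt (le_max_left _ _) hrr', hr'1⟩
    have := hIoo hmem w rfl
    have := ΦleM (f w)
    linarith
  have hzc : z ∈ closure (Metric.ball (0:ℂ) r') := by
    rw [closure_ball _ hr'0.ne']
    simpa [mem_closedBall, Complex.dist_eq] using
      ((le_max_right l ‖z‖).trans hrr'.le)
  have := Complex.norm_le_of_forall_mem_frontier_norm_le isBounded_ball hd2 hfr hzc
  simpa using this


/-- **Theorem (Lemma on subsolutions, part (a)).**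
With `M = sup Φ`, every subsolution satisfies `|f'| ≤ M` on `𝔻`; consequently every subsolution
has a Lipschitz continuous extension to the closed disk with Lipschitz constant `M` (independent
of `f`), and the family of subsolutions is uniformly bounded on the closed disk and
equicontinuous at every point of the closed disk. -/
theorem subsolutions_deriv_bound_lipschitz_equicontinuous (Φ : ℂ → ℝ)
    (hpos : ∀ w, 0 < Φ w) (hcont : Continuous Φ) (hbdd : BddAbove (Set.range Φ))
    (M : ℝ) (hM : M = sSup (Set.range Φ)) :
    (∀ f : ℂ → ℂ, IsSubsolution Φ f → ∀ z ∈ Metric.ball (0 : ℂ) 1,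
        ‖deriv f z‖ ≤ M) ∧
    (∀ f : ℂ → ℂ, IsSubsolution Φ f → ∃ F : ℂ → ℂ,
        Set.EqOn F f (Metric.ball (0 : ℂ) 1) ∧
        LipschitzOnWith (Real.toNNReal M) F (Metric.closedBall (0 : ℂ) 1)) ∧
    (∃ C : ℝ, ∀ f : ℂ → ℂ, IsSubsolution Φ f → ∀ z ∈ Metric.ball (0 : ℂ) 1,
        ‖f z‖ ≤ C) ∧
    (∀ z₀ ∈ Metric.closedBall (0 : ℂ) 1, ∀ ε > (0 : ℝ), ∃ δ > (0 : ℝ),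
        ∀ f : ℂ → ℂ, IsSubsolution Φ f →
          ∀ z₁ ∈ Metric.ball (0 : ℂ) 1, ∀ z₂ ∈ Metric.ball (0 : ℂ) 1,
            dist z₁ z₀ < δ → dist z₂ z₀ < δ → dist (f z₁) (f z₂) < ε) := by
  have hM0 : 0 < M := lt_of_lt_of_le (hpos 0) (hM ▸ le_csSup hbdd ⟨0, rfl⟩)
  -- key Lipschitz estimate on the open ball
  have key : ∀ f : ℂ → ℂ, IsSubsolution Φ f → ∀ z₁ ∈ Metric.ball (0:ℂ) 1,
      ∀ z₂ ∈ Metric.ball (0:ℂ) 1, ‖f z₁ - f z₂‖ ≤ M * ‖z₁ - z₂‖ := by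
    intro f hf z₁ h₁ z₂ h₂
    exact (convex_ball (0:ℂ) 1).norm_image_sub_le_of_norm_deriv_le
      (fun x hx => hf.1.1.differentiableAt (isOpen_ball.mem_nhds hx))
      (fun x hx => by simpa using aux_deriv_bound Φ hbdd M hM f hf x hx)
      h₂ h₁
  refine ⟨fun f hf => aux_deriv_bound Φ hbdd M hM f hf, ?_, ?_, ?_⟩
  · -- Lipschitz extension
    intro f hf
    set t : ℕ → ℝ := fun n => 1 - ((n : ℝ) + 1)⁻¹ with ht
    have ht0 : ∀ n, 0 ≤ t n := by
      intro n
      have : ((n:ℝ)+1)⁻¹ ≤ 1 := by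
        rw [inv_le_one_iff₀]; right; linarith [Nat.cast_nonneg (α := ℝ) n]
      simp only [ht]; linarith
    have ht1 : ∀ n, t n < 1 := by
      intro n
      have : 0 < ((n:ℝ)+1)⁻¹ := by positivity
      simp only [ht]; linarith
    have hmem : ∀ n, ∀ z ∈ Metric.closedBall (0:ℂ) 1, (t n : ℂ) • z ∈ Metric.ball (0:ℂ) 1 := by
      intro n z hz
      rw [mem_closedBall, Complex.dist_eq, sub_zero] at hz
      rw [mem_ball, Complex.dist_eq, sub_zero]
      calc ‖(t n : ℂ) • z‖ = t n * ‖z‖ := by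
            rw [norm_smul]; simp [_root_.abs_of_nonneg (ht0 n)]
        _ ≤ t n * 1 := mul_le_mul_of_nonneg_left hz (ht0 n)
        _ < 1 := by linarith [ht1 n]
    have hcauchy : ∀ z ∈ Metric.closedBall (0:ℂ) 1, CauchySeq (fun n => f ((t n : ℂ) • z)) := by
      intro z hz
      rw [mem_closedBall, Complex.dist_eq, sub_zero] at hz
      refine cauchySeq_of_le_tendsto_0 (fun N => M * (2 * ((N:ℝ)+1)⁻¹)) ?_ ?_
      · intro n m N hn hm
        have h1 := key f hf _ (hmem n z (by simpa [mem_closedBall, Complex.dist_eq] using hz))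
          _ (hmem m z (by simpa [mem_closedBall, Complex.dist_eq] using hz))
        rw [dist_eq_norm]
        refine h1.trans ?_
        have : ((t n : ℂ)) • z - ((t m : ℂ)) • z = ((t n - t m : ℝ) : ℂ) • z := by
          push_cast; ring_nf
        rw [this, norm_smul]
        have hns : ‖((t n - t m : ℝ) : ℂ)‖ = |t n - t m| := by
          rw [Complex.norm_real, Real.norm_eq_abs]
        rw [hns]
        have hd : |t n - t m| ≤ 2 * ((N:ℝ)+1)⁻¹ := by
          have hn' : (N:ℝ) ≤ n := by exact_mod_cast hn
          have hm' : (N:ℝ) ≤ m := by exact_mod_cast hm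
          have e1 : ((n:ℝ)+1)⁻¹ ≤ ((N:ℝ)+1)⁻¹ := inv_anti₀ (by positivity) (by linarith)
          have e2 : ((m:ℝ)+1)⁻¹ ≤ ((N:ℝ)+1)⁻¹ := inv_anti₀ (by positivity) (by linarith)
          have : t n - t m = ((m:ℝ)+1)⁻¹ - ((n:ℝ)+1)⁻¹ := by simp only [ht]; ring
          rw [this, abs_sub_le_iff]
          constructor <;> [skip; skip] <;>
            nlinarith [inv_nonneg.mpr (by positivity : (0:ℝ) ≤ (n:ℝ)+1),
              inv_nonneg.mpr (by positivity : (0:ℝ) ≤ (m:ℝ)+1)]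
        have hz' : ‖z‖ ≤ 1 := hz
        calc M * (|t n - t m| * ‖z‖) ≤ M * |t n - t m| := by
              refine mul_le_mul_of_nonneg_left ?_ hM0.le
              calc |t n - t m| * ‖z‖ ≤ |t n - t m| * 1 :=
                    mul_le_mul_of_nonneg_left hz' (abs_nonneg _)
                _ = |t n - t m| := mul_one _
          _ ≤ M * (2 * ((N:ℝ)+1)⁻¹) := by nlinarith [hM0.le]
      · have : Filter.Tendsto (fun N : ℕ => ((N:ℝ)+1)⁻¹) Filter.atTop (nhds 0) :=
          tendsto_one_div_add_atTop_nhds_zero_nat.congr (by intro n; rw [one_div])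
        simpa using (this.const_mul 2).const_mul M
    set F : ℂ → ℂ := fun z => limUnder Filter.atTop (fun n => f ((t n : ℂ) • z)) with hF
    have htendF : ∀ z ∈ Metric.closedBall (0:ℂ) 1,
        Filter.Tendsto (fun n => f ((t n : ℂ) • z)) Filter.atTop (nhds (F z)) :=
      fun z hz => (hcauchy z hz).tendsto_limUnder
    have htlim : Filter.Tendsto t Filter.atTop (nhds 1) := by
      have : Filter.Tendsto (fun N : ℕ => ((N:ℝ)+1)⁻¹) Filter.atTop (nhds 0) :=
        tendsto_one_div_add_atTop_nhds_zero_nat.congr (by intro n; rw [one_div])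
      simpa [ht] using (tendsto_const_nhds (x := (1:ℝ))).sub this
    have hEq : Set.EqOn F f (Metric.ball (0:ℂ) 1) := by
      intro z hz
      have hzc : z ∈ Metric.closedBall (0:ℂ) 1 := Metric.ball_subset_closedBall hz
      have h1 : Filter.Tendsto (fun n => ((t n : ℂ)) • z) Filter.atTop (nhds z) := by
        have : Filter.Tendsto (fun n => ((t n : ℝ) : ℂ)) Filter.atTop (nhds (1:ℂ)) := by
          exact (Complex.continuous_ofReal.tendsto 1).comp htlim
        simpa using this.smul (tendsto_const_nhds (x := z))
      have hc : ContinuousAt f z :=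
        (hf.1.1.differentiableAt (isOpen_ball.mem_nhds hz)).continuousAt
      exact tendsto_nhds_unique (htendF z hzc) (hc.tendsto.comp h1)
    refine ⟨F, hEq, ?_⟩
    have : ∀ z₁ ∈ Metric.closedBall (0:ℂ) 1, ∀ z₂ ∈ Metric.closedBall (0:ℂ) 1,
        dist (F z₁) (F z₂) ≤ M * dist z₁ z₂ := by
      intro z₁ h₁ z₂ h₂
      have hT := ((htendF z₁ h₁).dist (htendF z₂ h₂))
      refine le_of_tendsto hT (Filter.Eventually.of_forall fun n => ?_)
      rw [dist_eq_norm]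
      refine (key f hf _ (hmem n z₁ h₁) _ (hmem n z₂ h₂)).trans ?_
      have : ((t n : ℂ)) • z₁ - ((t n : ℂ)) • z₂ = ((t n : ℂ)) • (z₁ - z₂) := by
        rw [smul_sub]
      rw [this, norm_smul, Complex.norm_real, Real.norm_eq_abs, _root_.abs_of_nonneg (ht0 n),
        dist_eq_norm]
      refine mul_le_mul_of_nonneg_left ?_ hM0.le
      calc t n * ‖z₁ - z₂‖ ≤ 1 * ‖z₁ - z₂‖ :=
            mul_le_mul_of_nonneg_right (ht1 n).le (norm_nonneg _)
        _ = ‖z₁ - z₂‖ := one_mul _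
    refine LipschitzOnWith.of_dist_le_mul fun x hx y hy => ?_
    rw [Real.coe_toNNReal M hM0.le]
    exact this x hx y hy
  · -- uniform bound
    refine ⟨M, fun f hf z hz => ?_⟩
    have h0 : (0:ℂ) ∈ Metric.ball (0:ℂ) 1 := by simp
    have := key f hf z hz 0 h0
    rw [hf.1.2.1] at this
    simp only [sub_zero] at this
    calc ‖f z‖ = ‖f z‖ := rfl
      _ ≤ M * ‖z‖ := this
      _ ≤ M * 1 := by
          have : ‖z‖ < 1 := by simpa [Complex.dist_eq] using hz
          nlinarith
      _ = M := mul_one M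
  · -- equicontinuity
    intro z₀ _ ε hε
    refine ⟨ε / (2 * M + 2), by positivity, fun f hf z₁ h₁ z₂ h₂ hd₁ hd₂ => ?_⟩
    have := key f hf z₁ h₁ z₂ h₂
    rw [dist_eq_norm]
    refine lt_of_le_of_lt this ?_
    have htri : ‖z₁ - z₂‖ ≤ dist z₁ z₀ + dist z₂ z₀ := by
      rw [← dist_eq_norm]
      calc dist z₁ z₂ ≤ dist z₁ z₀ + dist z₀ z₂ := dist_triangle _ _ _
        _ = dist z₁ z₀ + dist z₂ z₀ := by rw [dist_comm z₀ z₂]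
    have hkey : M * (ε / (2 * M + 2)) < ε / 2 := by
      rw [mul_div_assoc', div_lt_div_iff₀ (by positivity) two_pos]
      nlinarith
    linarith [mul_le_mul_of_nonneg_left htri hM0.le,
      mul_lt_mul_of_pos_left hd₁ hM0, mul_lt_mul_of_pos_left hd₂ hM0]
end
end

section
/- Let Φ : ℂ → ℝ be a positive, continuous and bounded function and let f ∈ H₀(𝔻) have a continuous extension to the closed unit disk. Then f is a subsolution for Φ if and only if for every z in the unit disk, log |f'(z)| ≤ (1/2π) ∫₀^{2π} P(z, e^{it}) · log Φ(f(e^{it})) dt, where P(z, e^{it}) = Re((e^{it}+z)/(e^{it}−z)) is the Poisson kernel. -/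
set_option maxHeartbeats 1000000

open Complex Filter Set Metric MeasureTheory

noncomputable section

/-- Poisson kernel `P(z, e^{it}) = Re((e^{it}+z)/(e^{it}-z))`. -/
def poissonKer (z : ℂ) (t : ℝ) : ℝ :=
  ((Complex.exp (t * Complex.I) + z) / (Complex.exp (t * Complex.I) - z)).re

/-! ### Auxiliary lemmas -/

lemma abs_expI (t : ℝ) : ‖Complex.exp (t * Complex.I)‖ = 1 :=
  Complex.norm_exp_ofReal_mul_I t

lemma expI_mem_sphere (t : ℝ) : Complex.exp (t * Complex.I) ∈ Metric.sphere (0:ℂ) 1 := by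
  simp [Complex.dist_eq, abs_expI]

lemma expI_mem_closedBall (t : ℝ) : Complex.exp (t * Complex.I) ∈ Metric.closedBall (0:ℂ) 1 :=
  Metric.sphere_subset_closedBall (expI_mem_sphere t)

lemma expI_ne (z : ℂ) (hz : ‖z‖ < 1) (t : ℝ) : Complex.exp (t * Complex.I) - z ≠ 0 := by
  intro h
  have : ‖Complex.exp (t * Complex.I)‖ = ‖z‖ := by
    rw [sub_eq_zero] at h; rw [h]
  rw [abs_expI] at this; linarith [this]

lemma pk_formula (z : ℂ) (hz : ‖z‖ < 1) (t : ℝ) :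
    poissonKer z t = (1 - Complex.normSq z) / Complex.normSq (Complex.exp (t * Complex.I) - z) := by
  have hw : Complex.normSq (Complex.exp (t * Complex.I)) = 1 := by
    rw [Complex.normSq_eq_norm_sq, abs_expI]; norm_num
  rw [poissonKer, Complex.div_re, ← add_div]
  congr 1
  rw [Complex.normSq_apply] at hw
  simp only [Complex.add_re, Complex.add_im, Complex.sub_re, Complex.sub_im, Complex.normSq_apply]
  nlinarith [hw]

lemma normSq_lt_one (z : ℂ) (hz : ‖z‖ < 1) : Complex.normSq z < 1 := by
  rw [Complex.normSq_eq_norm_sq]; nlinarith [norm_nonneg z]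

lemma pk_nonneg (z : ℂ) (hz : ‖z‖ < 1) (t : ℝ) : 0 ≤ poissonKer z t := by
  rw [pk_formula z hz t]
  exact div_nonneg (by linarith [normSq_lt_one z hz]) (Complex.normSq_nonneg _)

lemma pk_continuous (z : ℂ) (hz : ‖z‖ < 1) :
    Continuous (fun t => poissonKer z t) := by
  apply Complex.continuous_re.comp
  apply Continuous.div
  · fun_prop
  · fun_prop
  · exact fun t => expI_ne z hz t

lemma cont_inv_ker (z : ℂ) (hz : ‖z‖ < 1) :
    Continuous (fun t : ℝ => (Complex.exp (t * Complex.I) - z)⁻¹) := by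
  apply Continuous.inv₀
  · fun_prop
  · exact fun t => expI_ne z hz t

lemma integral_exp_sub_inv (z : ℂ) (hz : ‖z‖ < 1) :
    ∫ t in (0:ℝ)..(2*Real.pi), (Complex.exp (t * Complex.I) - z)⁻¹ = 0 := by
  rcases eq_or_ne z 0 with rfl | hz0
  · have key : ∀ t ∈ Set.uIcc (0:ℝ) (2*Real.pi),
        HasDerivAt (fun s : ℝ => Complex.I * Complex.exp (-(s * Complex.I)))
          ((Complex.exp (t * Complex.I) - 0)⁻¹) t := by
      intro t _
      have h1 : HasDerivAt (fun s : ℝ => -(s * Complex.I)) (-Complex.I) t := by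
        have := ((Complex.ofRealCLM.hasDerivAt (x := t)).mul_const Complex.I).neg
        simpa [Pi.neg_def] using this
      have h2 := (h1.cexp).const_mul Complex.I
      refine h2.congr_deriv ?_
      rw [sub_zero, ← Complex.exp_neg]
      ring_nf
      rw [Complex.I_sq]
      ring
    rw [intervalIntegral.integral_eq_sub_of_hasDerivAt key
      ((cont_inv_ker 0 (by simp)).intervalIntegrable _ _)]
    have h2pi : Complex.exp (-(2 * (Real.pi : ℂ) * Complex.I)) = 1 := by
      rw [Complex.exp_neg, Complex.exp_two_pi_mul_I]; norm_num
    simp [h2pi]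
  · have hslit : ∀ s : ℝ, (1 - z * Complex.exp (-(s * Complex.I))) ∈ Complex.slitPlane := by
      intro s
      left
      have h1 : ‖z * Complex.exp (-(s * Complex.I))‖ < 1 := by
        rw [norm_mul]
        have : ‖Complex.exp (-(s * Complex.I))‖ = 1 := by
          rw [show -((s:ℂ) * Complex.I) = ((-s : ℝ) : ℂ) * Complex.I by push_cast; ring]
          exact abs_expI (-s)
        rw [this, mul_one]; exact hz
      have h2 : (z * Complex.exp (-(s * Complex.I))).re ≤
          ‖z * Complex.exp (-(s * Complex.I))‖ := Complex.re_le_norm _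
      simp only [Complex.sub_re, Complex.one_re]
      linarith
    have key : ∀ t ∈ Set.uIcc (0:ℝ) (2*Real.pi),
        HasDerivAt (fun s : ℝ => (Complex.I * z)⁻¹ * Complex.log (1 - z * Complex.exp (-(s * Complex.I))))
          ((Complex.exp (t * Complex.I) - z)⁻¹) t := by
      intro t _
      have h1 : HasDerivAt (fun s : ℝ => -(s * Complex.I)) (-Complex.I) t := by
        have := ((Complex.ofRealCLM.hasDerivAt (x := t)).mul_const Complex.I).neg
        simpa [Pi.neg_def] using this
      have h2 : HasDerivAt (fun s : ℝ => 1 - z * Complex.exp (-(s * Complex.I)))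
          (z * Complex.I * Complex.exp (-(t * Complex.I))) t := by
        have := ((h1.cexp).const_mul z).const_sub 1
        refine this.congr_deriv ?_; ring
      have h3 := ((Complex.hasDerivAt_log (hslit t)).comp t h2).const_mul ((Complex.I * z)⁻¹)
      refine h3.congr_deriv ?_
      have hexp : Complex.exp (t * Complex.I) ≠ 0 := Complex.exp_ne_zero _
      have hden : (1 - z * Complex.exp (-(t * Complex.I))) ≠ 0 :=
        Complex.slitPlane_ne_zero (hslit t)
      have hne : Complex.exp (t * Complex.I) - z ≠ 0 := expI_ne z hz t
      have hee : Complex.exp (-((t:ℂ) * Complex.I)) * Complex.exp ((t:ℂ) * Complex.I) = 1 := by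
        rw [← Complex.exp_add]; simp
      have he' : Complex.exp (-(t * Complex.I)) ≠ 0 := Complex.exp_ne_zero _
      rw [show (1 - z * Complex.exp (-(t * Complex.I))) = Complex.exp (-(t * Complex.I)) * (Complex.exp (t * Complex.I) - z) by linear_combination (-1:ℂ) * hee]
      field_simp
    rw [intervalIntegral.integral_eq_sub_of_hasDerivAt key
      ((cont_inv_ker z hz).intervalIntegrable _ _)]
    have h2pi : Complex.exp (-(2 * (Real.pi : ℂ) * Complex.I)) = 1 := by
      rw [Complex.exp_neg, Complex.exp_two_pi_mul_I]; norm_num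
    simp [h2pi]

lemma integral_re_swap (a b : ℝ) (h : ℝ → ℂ) (hc : Continuous h) :
    (∫ t in a..b, h t).re = ∫ t in a..b, (h t).re := by
  simpa using (ContinuousLinearMap.intervalIntegral_comp_comm Complex.reCLM
    (hc.intervalIntegrable a b)).symm

lemma pk_integral (z : ℂ) (hz : ‖z‖ < 1) :
    ∫ t in (0:ℝ)..(2*Real.pi), poissonKer z t = 2*Real.pi := by
  have hker : ∀ t : ℝ, poissonKer z t
      = 1 + (2 * z * (Complex.exp (t * Complex.I) - z)⁻¹).re := by
    intro t
    have hne := expI_ne z hz t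
    rw [poissonKer]
    have h1 : (Complex.exp (t * Complex.I) + z) / (Complex.exp (t * Complex.I) - z)
        = 1 + 2 * z * (Complex.exp (t * Complex.I) - z)⁻¹ := by
      field_simp; ring
    rw [h1, Complex.add_re, Complex.one_re]
  simp_rw [hker]
  have hcont : Continuous (fun t : ℝ => 2 * z * (Complex.exp (t * Complex.I) - z)⁻¹) :=
    continuous_const.mul (cont_inv_ker z hz)
  have hcont2 : Continuous (fun t : ℝ => (2 * z * (Complex.exp (t * Complex.I) - z)⁻¹).re) :=
    Complex.continuous_re.comp hcont
  rw [intervalIntegral.integral_add intervalIntegrable_const (hcont2.intervalIntegrable _ _)]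
  rw [← integral_re_swap _ _ _ hcont, intervalIntegral.integral_const_mul,
    integral_exp_sub_inv z hz]
  simp

lemma pk_mul_sq_le (z : ℂ) (hz : ‖z‖ < 1) (hz2 : (1:ℝ)/2 < ‖z‖) (t : ℝ) :
    poissonKer z t * (‖Complex.exp (t * Complex.I) - (‖z‖ : ℂ)⁻¹ * z‖)^2 ≤
      2*(1 - Complex.normSq z) + 2*(1 - ‖z‖)^2 * poissonKer z t := by
  set a := ‖z‖ with ha
  set w := Complex.exp (t * Complex.I) with hw
  set ζ := (a : ℂ)⁻¹ * z with hζ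
  have ha0 : (0:ℝ) < a := by linarith
  have hzζ : ‖z - ζ‖ = 1 - a := by
    have : z - ζ = ((1 - a⁻¹ : ℝ) : ℂ) * z := by
      rw [hζ]; push_cast; ring
    rw [this, norm_mul, Complex.norm_real, Real.norm_eq_abs, ← ha]
    rw [abs_of_nonpos (by rw [sub_nonpos]; exact (one_le_inv₀ ha0).mpr (le_of_lt hz))]
    field_simp; ring
  have htri : ‖w - ζ‖ ≤ ‖w - z‖ + (1 - a) := by
    calc ‖w - ζ‖ = ‖(w - z) + (z - ζ)‖ := by ring_nf
    _ ≤ ‖w - z‖ + ‖z - ζ‖ := norm_add_le _ _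
    _ = ‖w - z‖ + (1 - a) := by rw [hzζ]
  have hD : 0 < Complex.normSq (w - z) := by
    rw [Complex.normSq_pos]; exact expI_ne z hz t
  have hDabs : (‖w - z‖)^2 = Complex.normSq (w - z) := by
    rw [Complex.sq_norm]
  rw [pk_formula z hz t, ← hw]
  set n := Complex.normSq z with hn
  set D := Complex.normSq (w - z) with hDdef
  have hp : (1 - n)/D * D = 1 - n := div_mul_cancel₀ _ (ne_of_gt hD)
  have hpnn : 0 ≤ (1 - n)/D := div_nonneg (by linarith [normSq_lt_one z hz]) hD.le
  have hsq : (‖w - ζ‖)^2 ≤ 2*D + 2*(1-a)^2 := by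
    have h4 := pow_le_pow_left₀ (norm_nonneg (w - ζ)) htri 2
    nlinarith [h4, sq_nonneg (‖w - z‖ - (1-a)), hDabs]
  nlinarith [mul_le_mul_of_nonneg_left hsq hpnn, hp]

lemma poisson_boundary (g : ℂ → ℝ) (hg : ContinuousOn g (Metric.closedBall (0:ℂ) 1))
    {ε : ℝ} (hε : 0 < ε) :
    ∀ᶠ z in toBoundary,
      |(1/(2*Real.pi)) * (∫ t in (0:ℝ)..(2*Real.pi), poissonKer z t * g (Complex.exp (t * Complex.I)))
        - g z| < ε := by
  have hπ : 0 < Real.pi := Real.pi_pos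
  have hK : IsCompact (Metric.closedBall (0:ℂ) 1) := isCompact_closedBall 0 1
  -- uniform continuity
  obtain ⟨δ, hδ0, hδ⟩ := Metric.uniformContinuousOn_iff.mp (hK.uniformContinuousOn_of_continuous hg)
    (ε/4) (by linarith)
  -- bound
  obtain ⟨C, hC⟩ := hK.exists_bound_of_continuousOn hg
  have hC0 : 0 ≤ C := le_trans (norm_nonneg _) (hC 0 (by simp))
  -- choice of r
  set η := min δ (ε*δ^2/(48*(C+1))) with hη
  have hη0 : 0 < η := lt_min hδ0 (by positivity)
  set r : ℝ := max (1 - η) (1/2) with hr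
  have hr1 : r < 1 := by
    rw [hr]; apply max_lt (by linarith) (by norm_num)
  have hmem : (fun z : ℂ => ‖z‖) ⁻¹' (Set.Ioo r 1) ∈ toBoundary :=
    Filter.preimage_mem_comap (Ioo_mem_nhdsLT_of_mem ⟨hr1, le_rfl⟩)
  filter_upwards [hmem] with z hz'
  obtain ⟨hzr, hz1⟩ := hz'
  set a := ‖z‖ with ha
  have ha2 : (1:ℝ)/2 < a := lt_of_le_of_lt (le_max_right _ _) hzr
  have haη : 1 - a < η := by
    have := lt_of_le_of_lt (le_max_left (1-η) (1/2)) hzr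
    linarith
  have ha0 : (0:ℝ) < a := by linarith
  have hz : ‖z‖ < 1 := hz1
  set ζ := (a : ℂ)⁻¹ * z with hζ
  have hζabs : ‖ζ‖ = 1 := by
    rw [hζ, norm_mul, norm_inv, Complex.norm_real, Real.norm_eq_abs, abs_of_pos ha0, ← ha]
    field_simp
  have hζmem : ζ ∈ Metric.closedBall (0:ℂ) 1 := by
    simp [Complex.dist_eq, hζabs]
  have hzmem : z ∈ Metric.closedBall (0:ℂ) 1 := by
    simp [Complex.dist_eq]; exact hz.le
  have hzζ : dist z ζ = 1 - a := by
    rw [Complex.dist_eq]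
    have : z - ζ = ((1 - a⁻¹ : ℝ) : ℂ) * z := by rw [hζ]; push_cast; ring
    rw [this, norm_mul, Complex.norm_real, Real.norm_eq_abs, ← ha]
    rw [abs_of_nonpos (by rw [sub_nonpos]; exact (one_le_inv₀ ha0).mpr hz.le)]
    field_simp; ring
  -- continuity of boundary data
  have hφc : Continuous (fun t : ℝ => g (Complex.exp (t * Complex.I))) :=
    hg.comp_continuous (by fun_prop) expI_mem_closedBall
  have hPc := pk_continuous z hz
  -- |g ζ - g z| < ε/4
  have hgz : |g ζ - g z| < ε/4 := by
    have := hδ ζ hζmem z hzmem (by rw [dist_comm, hzζ]; exact lt_of_lt_of_le haη (min_le_left _ _))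
    rwa [Real.dist_eq] at this
  -- pointwise bound on the integrand
  set c := g ζ with hc
  have hpt : ∀ t : ℝ, |poissonKer z t * (g (Complex.exp (t * Complex.I)) - c)| ≤
      (ε/4 + (4*C/δ^2)*(1-a)^2) * poissonKer z t + (4*C/δ^2)*(1 - Complex.normSq z) := by
    intro t
    set w := Complex.exp (t * Complex.I) with hw
    have hPnn := pk_nonneg z hz t
    have habs : |poissonKer z t * (g w - c)| = poissonKer z t * |g w - c| := by
      rw [abs_mul, _root_.abs_of_nonneg hPnn]
    rw [habs]
    have hgbd : |g w - c| ≤ ε/4 + (2*C/δ^2) * (‖w - ζ‖)^2 := by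
      rcases lt_or_ge (‖w - ζ‖) δ with hlt | hge
      · have := hδ w (expI_mem_closedBall t) ζ hζmem (by rwa [Complex.dist_eq])
        rw [Real.dist_eq] at this
        have h2 : 0 ≤ (2*C/δ^2) * (‖w - ζ‖)^2 := by positivity
        linarith
      · have h1 : |g w - c| ≤ 2*C := by
          have h2 := hC w (expI_mem_closedBall t)
          have h3 := hC ζ hζmem
          rw [Real.norm_eq_abs] at h2 h3
          have := abs_sub (g w) c
          calc |g w - c| ≤ |g w| + |c| := abs_sub _ _
          _ ≤ 2*C := by linarith
        have h2 : 2*C ≤ (2*C/δ^2) * (‖w - ζ‖)^2 := by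
          rw [div_mul_eq_mul_div, le_div_iff₀ (by positivity)]
          have : δ^2 ≤ (‖w - ζ‖)^2 := by nlinarith
          nlinarith
        have : 0 < ε/4 := by linarith
        linarith
    have step1 : poissonKer z t * |g w - c| ≤ poissonKer z t * (ε/4 + (2*C/δ^2) * (‖w - ζ‖)^2) :=
      mul_le_mul_of_nonneg_left hgbd hPnn
    have step2 := pk_mul_sq_le z hz ha2 t
    rw [← hw, ← ha, ← hζ] at step2
    have step3 : poissonKer z t * ((2*C/δ^2) * (‖w - ζ‖)^2)
        ≤ (2*C/δ^2) * (2*(1 - Complex.normSq z) + 2*(1 - a)^2 * poissonKer z t) := by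
      have hcd : 0 ≤ 2*C/δ^2 := by positivity
      calc poissonKer z t * ((2*C/δ^2) * (‖w - ζ‖)^2)
          = (2*C/δ^2) * (poissonKer z t * (‖w - ζ‖)^2) := by ring
      _ ≤ (2*C/δ^2) * (2*(1 - Complex.normSq z) + 2*(1 - a)^2 * poissonKer z t) :=
          mul_le_mul_of_nonneg_left step2 hcd
    have step1' : poissonKer z t * |g w - c| ≤ poissonKer z t * (ε/4) + poissonKer z t * ((2*C/δ^2) * (‖w - ζ‖)^2) := by
      rw [← mul_add]; exact step1
    calc poissonKer z t * |g w - c|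
        ≤ poissonKer z t * (ε/4) + poissonKer z t * ((2*C/δ^2) * (‖w - ζ‖)^2) := step1'
    _ ≤ poissonKer z t * (ε/4) + (2*C/δ^2) * (2*(1 - Complex.normSq z) + 2*(1 - a)^2 * poissonKer z t) :=
        add_le_add_right step3 _
    _ = (ε/4 + (4*C/δ^2)*(1-a)^2) * poissonKer z t + (4*C/δ^2)*(1 - Complex.normSq z) := by ring
  -- integral computation
  have hintP : IntervalIntegrable (fun t => poissonKer z t) MeasureTheory.volume 0 (2*Real.pi) :=
    hPc.intervalIntegrable _ _
  have hintφ : IntervalIntegrable (fun t => poissonKer z t * g (Complex.exp (t * Complex.I)))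
      MeasureTheory.volume 0 (2*Real.pi) := (hPc.mul hφc).intervalIntegrable _ _
  have key1 : (1/(2*Real.pi)) * (∫ t in (0:ℝ)..(2*Real.pi), poissonKer z t * g (Complex.exp (t * Complex.I))) - c
      = (1/(2*Real.pi)) * (∫ t in (0:ℝ)..(2*Real.pi), poissonKer z t * (g (Complex.exp (t * Complex.I)) - c)) := by
    have : ∀ t : ℝ, poissonKer z t * (g (Complex.exp (t * Complex.I)) - c)
        = poissonKer z t * g (Complex.exp (t * Complex.I)) - c * poissonKer z t := by intro t; ring
    simp_rw [this]
    rw [intervalIntegral.integral_sub hintφ (hintP.const_mul c),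
      intervalIntegral.integral_const_mul, pk_integral z hz]
    generalize (∫ t in (0:ℝ)..(2*Real.pi), poissonKer z t * g (Complex.exp (t * Complex.I))) = I1
    field_simp
  have habsle : |(1/(2*Real.pi)) * (∫ t in (0:ℝ)..(2*Real.pi), poissonKer z t * (g (Complex.exp (t * Complex.I)) - c))|
      ≤ (1/(2*Real.pi)) * ((ε/4 + (4*C/δ^2)*(1-a)^2) * (2*Real.pi) + (4*C/δ^2)*(1 - Complex.normSq z) * (2*Real.pi)) := by
    rw [abs_mul, abs_of_pos (by positivity : (0:ℝ) < 1/(2*Real.pi))]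
    apply mul_le_mul_of_nonneg_left _ (by positivity)
    calc |∫ t in (0:ℝ)..(2*Real.pi), poissonKer z t * (g (Complex.exp (t * Complex.I)) - c)|
        ≤ ∫ t in (0:ℝ)..(2*Real.pi), |poissonKer z t * (g (Complex.exp (t * Complex.I)) - c)| := by
          apply intervalIntegral.abs_integral_le_integral_abs (by positivity)
    _ ≤ ∫ t in (0:ℝ)..(2*Real.pi), ((ε/4 + (4*C/δ^2)*(1-a)^2) * poissonKer z t + (4*C/δ^2)*(1 - Complex.normSq z)) := by
          apply intervalIntegral.integral_mono_on (by positivity)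
          · exact ((hPc.mul (hφc.sub continuous_const)).abs).intervalIntegrable _ _
          · exact ((continuous_const.mul hPc).add continuous_const).intervalIntegrable _ _
          · intro t _; exact hpt t
    _ = (ε/4 + (4*C/δ^2)*(1-a)^2) * (2*Real.pi) + (4*C/δ^2)*(1 - Complex.normSq z) * (2*Real.pi) := by
          rw [intervalIntegral.integral_add (hintP.const_mul _)
            intervalIntegrable_const,
            intervalIntegral.integral_const_mul, pk_integral z hz,
            intervalIntegral.integral_const]
          simp
          ring
  -- final numeric estimate
  have hnsq : 1 - Complex.normSq z ≤ 2*(1-a) := by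
    have : Complex.normSq z = a^2 := by rw [ha, Complex.sq_norm, Complex.normSq_eq_norm_sq]
    nlinarith
  have hsq : (1-a)^2 ≤ 1-a := by nlinarith
  have hmain : (1/(2*Real.pi)) * ((ε/4 + (4*C/δ^2)*(1-a)^2) * (2*Real.pi) + (4*C/δ^2)*(1 - Complex.normSq z) * (2*Real.pi))
      = ε/4 + (4*C/δ^2)*(1-a)^2 + (4*C/δ^2)*(1 - Complex.normSq z) := by
    field_simp
  have hδη : 1 - a < ε*δ^2/(48*(C+1)) := lt_of_lt_of_le haη (by rw [hη]; exact min_le_right _ _)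
  have hbound : (4*C/δ^2)*(1-a)^2 + (4*C/δ^2)*(1 - Complex.normSq z) ≤ ε/4 := by
    have h1 : (4*C/δ^2)*(1-a)^2 + (4*C/δ^2)*(1 - Complex.normSq z) ≤ (4*C/δ^2)*(3*(1-a)) := by
      have hcd : 0 ≤ 4*C/δ^2 := by positivity
      nlinarith [hnsq, hsq]
    have h2 : (4*C/δ^2)*(3*(1-a)) ≤ (12*C/δ^2)*(ε*δ^2/(48*(C+1))) := by
      have hcd : 0 ≤ 12*C/δ^2 := by positivity
      calc (4*C/δ^2)*(3*(1-a)) = (12*C/δ^2)*(1-a) := by ring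
      _ ≤ (12*C/δ^2)*(ε*δ^2/(48*(C+1))) := mul_le_mul_of_nonneg_left hδη.le hcd
    have h3 : (12*C/δ^2)*(ε*δ^2/(48*(C+1))) ≤ ε/4 := by
      rw [show (12*C/δ^2)*(ε*δ^2/(48*(C+1))) = (C/(C+1)) * (ε/4) by field_simp; ring]
      have : C/(C+1) ≤ 1 := by rw [div_le_one (by linarith)]; linarith
      nlinarith
    linarith
  calc |(1/(2*Real.pi)) * (∫ t in (0:ℝ)..(2*Real.pi), poissonKer z t * g (Complex.exp (t * Complex.I))) - g z|
      ≤ |(1/(2*Real.pi)) * (∫ t in (0:ℝ)..(2*Real.pi), poissonKer z t * g (Complex.exp (t * Complex.I))) - c|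
        + |c - g z| := abs_sub_le _ _ _
  _ < (ε/4 + ε/4) + ε/4 := by
      apply add_lt_add_of_le_of_lt
      · rw [key1]
        calc _ ≤ _ := habsle
        _ = ε/4 + ((4*C/δ^2)*(1-a)^2 + (4*C/δ^2)*(1 - Complex.normSq z)) := by rw [hmain]; ring
        _ ≤ ε/4 + ε/4 := by linarith
      · exact hgz
  _ < ε := by linarith

def Hfun (g : ℂ → ℝ) (z : ℂ) : ℂ :=
  ((1/(2*Real.pi) : ℝ) : ℂ) * ∫ t in (0:ℝ)..(2*Real.pi),
    ((Complex.exp (t * Complex.I) + z) / (Complex.exp (t * Complex.I) - z))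
      * (g (Complex.exp (t * Complex.I)) : ℂ)

lemma cont_ker_mul (g : ℂ → ℝ) (hg : ContinuousOn g (Metric.closedBall (0:ℂ) 1))
    (z : ℂ) (hz : ‖z‖ < 1) :
    Continuous (fun t : ℝ =>
      ((Complex.exp (t * Complex.I) + z) / (Complex.exp (t * Complex.I) - z))
        * (g (Complex.exp (t * Complex.I)) : ℂ)) := by
  have hφ : Continuous (fun t : ℝ => g (Complex.exp (t * Complex.I))) :=
    hg.comp_continuous (by fun_prop) expI_mem_closedBall
  apply Continuous.mul
  · apply Continuous.div (by fun_prop) (by fun_prop)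
    exact fun t => expI_ne z hz t
  · exact Complex.continuous_ofReal.comp hφ

lemma Hfun_re (g : ℂ → ℝ) (hg : ContinuousOn g (Metric.closedBall (0:ℂ) 1))
    (z : ℂ) (hz : ‖z‖ < 1) :
    (Hfun g z).re = (1/(2*Real.pi)) *
      ∫ t in (0:ℝ)..(2*Real.pi), poissonKer z t * g (Complex.exp (t * Complex.I)) := by
  rw [Hfun, Complex.re_ofReal_mul, integral_re_swap _ _ _ (cont_ker_mul g hg z hz)]
  congr 1
  apply intervalIntegral.integral_congr
  intro t _
  simp only [Complex.mul_re, Complex.ofReal_re, Complex.ofReal_im, poissonKer]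
  ring

lemma Hfun_differentiableOn (g : ℂ → ℝ) (hg : ContinuousOn g (Metric.closedBall (0:ℂ) 1)) :
    DifferentiableOn ℂ (Hfun g) (Metric.ball (0:ℂ) 1) := by
  set f : ℂ → ℂ := fun w => (-2 * Complex.I) * (g w : ℂ) with hf
  have hfc : ContinuousOn f (Metric.sphere (0:ℂ) 1) :=
    continuousOn_const.mul
      (Complex.continuous_ofReal.comp_continuousOn (hg.mono Metric.sphere_subset_closedBall))
  have hci : CircleIntegrable f 0 1 := hfc.circleIntegrable (by norm_num)
  have hps := hasFPowerSeriesOn_cauchy_integral (R := 1) hci (by norm_num)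
  set F : ℂ → ℂ := fun w => (2 * Real.pi * Complex.I : ℂ)⁻¹ • ∮ x in C(0, 1), (x - w)⁻¹ • f x
    with hF
  have hFd : DifferentiableOn ℂ F (Metric.ball (0:ℂ) 1) := by
    have := hps.differentiableOn
    rw [Metric.emetric_ball_nnreal] at this
    simp only [NNReal.coe_one] at this
    exact this
  set c₀ : ℂ := -(((1/(2*Real.pi) : ℝ) : ℂ) * ∫ t in (0:ℝ)..(2*Real.pi),
    (g (Complex.exp (t * Complex.I)) : ℂ)) with hc₀
  have heq : Set.EqOn (Hfun g) (fun z => c₀ + Complex.I * F z) (Metric.ball (0:ℂ) 1) := by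
    intro z hzmem
    have hz : ‖z‖ < 1 := by
      rw [Metric.mem_ball, Complex.dist_eq, sub_zero] at hzmem; exact hzmem
    have hcirc : (∮ x in C(0, 1), (x - z)⁻¹ • f x)
        = ∫ t in (0:ℝ)..(2*Real.pi),
            2 * Complex.exp (t * Complex.I) * (Complex.exp (t * Complex.I) - z)⁻¹
              * (g (Complex.exp (t * Complex.I)) : ℂ) := by
      rw [circleIntegral]
      apply intervalIntegral.integral_congr
      intro t _
      simp only [deriv_circleMap, circleMap, Complex.ofReal_one, zero_add, one_mul, smul_eq_mul,
        Complex.real_smul, hf]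
      have hne := expI_ne z hz t
      field_simp
      ring_nf
      rw [Complex.I_sq]
      ring
    have hgint : Continuous (fun t : ℝ => (g (Complex.exp (t * Complex.I)) : ℂ)) :=
      Complex.continuous_ofReal.comp (hg.comp_continuous (by fun_prop) expI_mem_closedBall)
    have hsplit : ∀ t : ℝ,
        ((Complex.exp (t * Complex.I) + z) / (Complex.exp (t * Complex.I) - z))
          * (g (Complex.exp (t * Complex.I)) : ℂ)
        = 2 * Complex.exp (t * Complex.I) * (Complex.exp (t * Complex.I) - z)⁻¹
            * (g (Complex.exp (t * Complex.I)) : ℂ)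
          - (g (Complex.exp (t * Complex.I)) : ℂ) := by
      intro t
      have hne := expI_ne z hz t
      field_simp
      ring
    have hcont2 : Continuous (fun t : ℝ =>
        2 * Complex.exp (t * Complex.I) * (Complex.exp (t * Complex.I) - z)⁻¹
          * (g (Complex.exp (t * Complex.I)) : ℂ)) := by
      apply Continuous.mul _ hgint
      apply Continuous.mul (by fun_prop)
      exact Continuous.inv₀ (by fun_prop) (fun t => expI_ne z hz t)
    show Hfun g z = c₀ + Complex.I * F z
    rw [Hfun, hF]
    beta_reduce
    rw [hcirc, hc₀]
    have : (∫ t in (0:ℝ)..(2*Real.pi),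
        ((Complex.exp (t * Complex.I) + z) / (Complex.exp (t * Complex.I) - z))
          * (g (Complex.exp (t * Complex.I)) : ℂ))
        = (∫ t in (0:ℝ)..(2*Real.pi),
            2 * Complex.exp (t * Complex.I) * (Complex.exp (t * Complex.I) - z)⁻¹
              * (g (Complex.exp (t * Complex.I)) : ℂ))
          - ∫ t in (0:ℝ)..(2*Real.pi), (g (Complex.exp (t * Complex.I)) : ℂ) := by
      rw [← intervalIntegral.integral_sub (hcont2.intervalIntegrable _ _)
        (hgint.intervalIntegrable _ _)]
      apply intervalIntegral.integral_congr
      intro t _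
      exact hsplit t
    rw [this]
    generalize (∫ t in (0:ℝ)..(2*Real.pi),
      2 * Complex.exp (t * Complex.I) * (Complex.exp (t * Complex.I) - z)⁻¹
        * (g (Complex.exp (t * Complex.I)) : ℂ)) = J1
    generalize (∫ t in (0:ℝ)..(2*Real.pi), (g (Complex.exp (t * Complex.I)) : ℂ)) = J2
    have hπ : (Real.pi : ℂ) ≠ 0 := by
      simp [Complex.ofReal_ne_zero, Real.pi_ne_zero]
    have hI : Complex.I ≠ 0 := Complex.I_ne_zero
    push_cast
    field_simp
    ring_nf
    field_simp
  exact (hFd.const_mul Complex.I).const_add c₀ |>.congr heq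

lemma maxmod (h : ℂ → ℂ) (hd : DifferentiableOn ℂ h (Metric.ball (0:ℂ) 1))
    (hb : ∀ ε : ℝ, 0 < ε → ∀ᶠ z in toBoundary, ‖h z‖ < 1 + ε) :
    ∀ z ∈ Metric.ball (0:ℂ) 1, ‖h z‖ ≤ 1 := by
  intro z₀ hz₀
  rw [Metric.mem_ball, Complex.dist_eq, sub_zero] at hz₀
  refine le_of_forall_pos_le_add ?_
  intro ε hε
  obtain ⟨s, hs, hsub⟩ := Filter.mem_comap.mp (hb ε hε)
  obtain ⟨r, hr, hIoo⟩ := mem_nhdsLT_iff_exists_Ioo_subset.mp hs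
  rw [Set.mem_Iio] at hr
  have hρ1 : max r (‖z₀‖) < 1 := max_lt hr hz₀
  obtain ⟨ρ', hρ'₁, hρ'₂⟩ := exists_between hρ1
  have hρ'0 : 0 < ρ' := lt_of_le_of_lt (le_trans (norm_nonneg z₀) (le_max_right _ _)) hρ'₁
  have key := Complex.norm_le_of_forall_mem_frontier_norm_le
    (U := Metric.ball (0:ℂ) ρ') (f := h) Metric.isBounded_ball
    ⟨hd.mono (Metric.ball_subset_ball hρ'₂.le),
      (hd.continuousOn).mono (by
        rw [closure_ball 0 (ne_of_gt hρ'0)]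
        exact Metric.closedBall_subset_ball hρ'₂)⟩
    (C := 1 + ε) ?_ (z := z₀) ?_
  · exact key
  · intro w hw
    rw [frontier_ball 0 (ne_of_gt hρ'0)] at hw
    have habs : ‖w‖ = ρ' := by
      rw [Metric.mem_sphere, Complex.dist_eq, sub_zero] at hw; exact hw
    have hmem : w ∈ (fun z : ℂ => ‖z‖) ⁻¹' s := by
      apply Set.mem_preimage.mpr
      apply hIoo
      rw [habs]
      exact ⟨lt_of_le_of_lt (le_max_left _ _) hρ'₁, hρ'₂⟩
    have := hsub hmem
    exact le_of_lt this
  · apply subset_closure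
    rw [Metric.mem_ball, Complex.dist_eq, sub_zero]
    exact lt_of_le_of_lt (le_max_right r _) hρ'₁


/-- **Theorem (Lemma on subsolutions, part (b)).** -/
theorem subsolution_iff_poisson_inequality (Φ : ℂ → ℝ)
    (hpos : ∀ w, 0 < Φ w) (hcont : Continuous Φ) (hbdd : BddAbove (Set.range Φ))
    (f F : ℂ → ℂ) (hf : MemH0 f)
    (hF : ContinuousOn F (Metric.closedBall (0 : ℂ) 1))
    (hFf : Set.EqOn F f (Metric.ball (0 : ℂ) 1)) :
    IsSubsolution Φ f ↔
      ∀ z ∈ Metric.ball (0 : ℂ) 1,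
        ‖deriv f z‖ ≤
          Real.exp ((1 / (2 * Real.pi)) *
            ∫ t in (0 : ℝ)..(2 * Real.pi),
              poissonKer z t * Real.log (Φ (F (Complex.exp (t * Complex.I))))) := by
  have hπ : 0 < Real.pi := Real.pi_pos
  have hΦF : ContinuousOn (fun w => Φ (F w)) (Metric.closedBall (0:ℂ) 1) :=
    hcont.comp_continuousOn hF
  have hgcont : ContinuousOn (fun w => Real.log (Φ (F w))) (Metric.closedBall (0:ℂ) 1) := by
    apply Real.continuousOn_log.comp hΦF
    intro w _
    exact Set.mem_compl_singleton_iff.mpr (ne_of_gt (hpos (F w)))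
  -- boundary convergence, instantiated
  have KB : ∀ ε : ℝ, 0 < ε → ∀ᶠ z in toBoundary,
      |(1/(2*Real.pi)) * (∫ t in (0:ℝ)..(2*Real.pi),
          poissonKer z t * Real.log (Φ (F (Complex.exp (t * Complex.I)))))
        - Real.log (Φ (F z))| < ε :=
    fun ε hε => poisson_boundary (fun w => Real.log (Φ (F w))) hgcont hε
  have hre : ∀ z : ℂ, ‖z‖ < 1 →
      (Hfun (fun w => Real.log (Φ (F w))) z).re
        = (1/(2*Real.pi)) * ∫ t in (0:ℝ)..(2*Real.pi),
            poissonKer z t * Real.log (Φ (F (Complex.exp (t * Complex.I)))) :=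
    fun z hz => Hfun_re _ hgcont z hz
  have hball : ∀ᶠ z in toBoundary, ‖z‖ < 1 :=
    Filter.preimage_mem_comap self_mem_nhdsWithin
  -- min of Φ on the compact image
  have hKcpt : IsCompact (F '' Metric.closedBall (0:ℂ) 1) :=
    (isCompact_closedBall (0:ℂ) 1).image_of_continuousOn hF
  obtain ⟨w₀, hw₀K, hw₀min⟩ := hKcpt.exists_isMinOn
    ⟨F 0, Set.mem_image_of_mem F (by simp)⟩ hcont.continuousOn
  set m := Φ w₀ with hmdef
  have hm : 0 < m := hpos w₀
  set M := sSup (Set.range Φ) with hMdef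
  have hMle : ∀ w, Φ w ≤ M := fun w => le_csSup hbdd (Set.mem_range_self w)
  have hM0 : 0 < M := lt_of_lt_of_le hm (hMle w₀)
  have hmem_ball : ∀ z : ℂ, ‖z‖ < 1 → z ∈ Metric.ball (0:ℂ) 1 := by
    intro z hz; rw [Metric.mem_ball, Complex.dist_eq, sub_zero]; exact hz
  have hmΦ : ∀ z : ℂ, ‖z‖ < 1 → m ≤ Φ (F z) := by
    intro z hz
    exact hw₀min (Set.mem_image_of_mem F (Metric.ball_subset_closedBall (hmem_ball z hz)))
  constructor
  · rintro ⟨-, hsub⟩ z₀ hz₀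
    set h : ℂ → ℂ := fun z => deriv f z * Complex.exp (-(Hfun (fun w => Real.log (Φ (F w))) z))
      with hhdef
    have hHdiff := Hfun_differentiableOn (fun w => Real.log (Φ (F w))) hgcont
    have hderiv_diff : DifferentiableOn ℂ (deriv f) (Metric.ball (0:ℂ) 1) :=
      ((hf.1.analyticOnNhd Metric.isOpen_ball).deriv).differentiableOn
    have hd : DifferentiableOn ℂ h (Metric.ball (0:ℂ) 1) :=
      hderiv_diff.mul (hHdiff.neg).cexp
    have habs : ∀ z : ℂ, ‖z‖ < 1 → ‖h z‖
        = ‖deriv f z‖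
          * Real.exp (-((1/(2*Real.pi)) * ∫ t in (0:ℝ)..(2*Real.pi),
              poissonKer z t * Real.log (Φ (F (Complex.exp (t * Complex.I)))))) := by
      intro z hz
      rw [hhdef]
      simp only [norm_mul, Complex.norm_exp, Complex.neg_re, hre z hz]
    have hb : ∀ ε : ℝ, 0 < ε → ∀ᶠ z in toBoundary, ‖h z‖ < 1 + ε := by
      intro ε hε
      set η := min ε 1 with hηdef
      have hη0 : 0 < η := lt_min hε one_pos
      have hη1 : η ≤ 1 := min_le_right _ _
      have hηε : η ≤ ε := min_le_left _ _
      have hlogpos : 0 < Real.log (1 + η/4) := Real.log_pos (by linarith)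
      filter_upwards [hsub (m*η/4) (by positivity), KB (Real.log (1 + η/4)) hlogpos, hball]
        with z h1 h2 h3
      have hzb := hmem_ball z h3
      have hFz : F z = f z := hFf hzb
      set p := Φ (f z) with hpdef
      have hp0 : 0 < p := hpos _
      have hmp : m ≤ p := by rw [hpdef, ← hFz]; exact hmΦ z h3
      set u := (1/(2*Real.pi)) * ∫ t in (0:ℝ)..(2*Real.pi),
        poissonKer z t * Real.log (Φ (F (Complex.exp (t * Complex.I)))) with hudef
      have hulow : Real.log p - Real.log (1 + η/4) < u := by
        have := (abs_lt.mp h2).1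
        rw [hFz] at this
        linarith
      have hE : Real.exp (-u) < (1 + η/4) / p := by
        have h4 : Real.exp (-u) < Real.exp (Real.log (1 + η/4) - Real.log p) := by
          apply Real.exp_lt_exp.mpr; linarith
        have h5 : Real.exp (Real.log (1 + η/4) - Real.log p) = (1 + η/4) / p := by
          rw [Real.exp_sub, Real.exp_log (by linarith : (0:ℝ) < 1 + η/4), Real.exp_log hp0]
        linarith [h4, h5.le]
      have hA : ‖deriv f z‖ < p + m*η/4 := by linarith [h1]
      rw [habs z h3]
      have hprod : ‖deriv f z‖ * Real.exp (-u)
          < (p + m*η/4) * ((1 + η/4) / p) :=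
        mul_lt_mul'' hA hE (norm_nonneg _) (Real.exp_nonneg _)
      have hfinal : (p + m*η/4) * ((1 + η/4) / p) ≤ 1 + ε := by
        rw [mul_div_assoc', div_le_iff₀ hp0]
        nlinarith [mul_le_mul_of_nonneg_right hmp (le_of_lt hη0), hp0, hη0, hη1, hηε,
          mul_pos hp0 hη0]
      calc ‖deriv f z‖ * Real.exp (-u) < (p + m*η/4) * ((1 + η/4) / p) := hprod
      _ ≤ 1 + ε := hfinal
    have hle := maxmod h hd hb z₀ hz₀
    have hz₀' : ‖z₀‖ < 1 := by
      rw [Metric.mem_ball, Complex.dist_eq, sub_zero] at hz₀; exact hz₀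
    rw [habs z₀ hz₀'] at hle
    set u := (1/(2*Real.pi)) * ∫ t in (0:ℝ)..(2*Real.pi),
      poissonKer z₀ t * Real.log (Φ (F (Complex.exp (t * Complex.I)))) with hudef
    have hepos : 0 < Real.exp u := Real.exp_pos u
    calc ‖deriv f z₀‖
        = ‖deriv f z₀‖ * Real.exp (-u) * Real.exp u := by
          rw [mul_assoc, ← Real.exp_add]; simp
    _ ≤ 1 * Real.exp u := mul_le_mul_of_nonneg_right hle hepos.le
    _ = Real.exp u := one_mul _
  · intro hineq
    refine ⟨hf, ?_⟩
    intro ε hε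
    have hlogpos : 0 < Real.log (1 + ε/(2*M)) := Real.log_pos (by
      have : 0 < ε/(2*M) := by positivity
      linarith)
    filter_upwards [KB (Real.log (1 + ε/(2*M))) hlogpos, hball] with z h2 h3
    have hzb := hmem_ball z h3
    have hFz : F z = f z := hFf hzb
    have hA := hineq z hzb
    set u := (1/(2*Real.pi)) * ∫ t in (0:ℝ)..(2*Real.pi),
      poissonKer z t * Real.log (Φ (F (Complex.exp (t * Complex.I)))) with hudef
    have hup : u < Real.log (Φ (F z)) + Real.log (1 + ε/(2*M)) := by
      have := (abs_lt.mp h2).2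
      linarith
    have hΦ0 : 0 < Φ (F z) := hpos _
    have hexp : Real.exp u < Φ (F z) * (1 + ε/(2*M)) := by
      have h4 : Real.exp u < Real.exp (Real.log (Φ (F z)) + Real.log (1 + ε/(2*M))) :=
        Real.exp_lt_exp.mpr hup
      rwa [Real.exp_add, Real.exp_log hΦ0,
        Real.exp_log (by positivity : (0:ℝ) < 1 + ε/(2*M))] at h4
    have hΦM : Φ (F z) ≤ M := hMle _
    have h5 : Φ (F z) * (1 + ε/(2*M)) ≤ Φ (F z) + ε/2 := by
      have : Φ (F z) * (ε/(2*M)) ≤ M * (ε/(2*M)) :=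
        mul_le_mul_of_nonneg_right hΦM (by positivity)
      have hMε : M * (ε/(2*M)) = ε/2 := by field_simp
      nlinarith
    have : ‖deriv f z‖ < Φ (F z) + ε := by
      calc ‖deriv f z‖ ≤ Real.exp u := hA
      _ < Φ (F z) * (1 + ε/(2*M)) := hexp
      _ ≤ Φ (F z) + ε/2 := h5
      _ < Φ (F z) + ε := by linarith
    rw [hFz] at this
    linarith
end
end
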